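/- The standard normal CDF Φ is log-concave on ℝ, i.e., the function w ↦ log Φ(w) is concave. -/

import Mathlib

/-- The standard normal cumulative distribution function. -/
noncomputable def stdNormalCDF (w : ℝ) : ℝ :=
  ∫ x in Set.Iic w, (Real.sqrt (2 * Real.pi))⁻¹ * Real.exp (-x ^ 2 / 2)

open Real MeasureTheory Set Filter

/-- The standard normal density. -/
noncomputable def stdNormalPDF (x : ℝ) : ℝ :=
  (Real.sqrt (2 * Real.pi))⁻¹ * Real.exp (-x ^ 2 / 2)

lemma pdf_pos (x : ℝ) : 0 < stdNormalPDF x := by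
  have h2π : 0 < 2 * π := by positivity
  exact mul_pos (inv_pos.2 (Real.sqrt_pos.2 h2π)) (exp_pos _)

lemma pdf_eq (x : ℝ) : stdNormalPDF x = (Real.sqrt (2 * Real.pi))⁻¹ * Real.exp (-(1/2) * x ^ 2) := by
  rw [stdNormalPDF]; ring_nf

lemma pdf_integrable : Integrable stdNormalPDF := by
  have : Integrable fun x : ℝ => Real.exp (-(1/2) * x ^ 2) :=
    integrable_exp_neg_mul_sq (by norm_num)
  exact (this.const_mul (Real.sqrt (2 * Real.pi))⁻¹).congr
    (Filter.Eventually.of_forall fun x => (pdf_eq x).symm)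

lemma pdf_continuous : Continuous stdNormalPDF := by
  unfold stdNormalPDF
  fun_prop

lemma cdf_pos (w : ℝ) : 0 < stdNormalCDF w := by
  have h : (0:ℝ) < ∫ x in Set.Iic w, stdNormalPDF x := by
    rw [setIntegral_pos_iff_support_of_nonneg_ae]
    · have : Function.support stdNormalPDF = Set.univ := by
        ext x; simp [(pdf_pos x).ne']
      rw [this, Set.univ_inter]
      simp [Real.volume_Iic]
    · filter_upwards with x using (pdf_pos x).le
    · exact pdf_integrable.integrableOn
  exact h

lemma cdf_hasDerivAt (w : ℝ) : HasDerivAt stdNormalCDF (stdNormalPDF w) w := by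
  have key : ∀ u : ℝ, stdNormalCDF u =
      (∫ x in (0:ℝ)..u, stdNormalPDF x) + stdNormalCDF 0 := by
    intro u
    have cdf_eq : ∀ v : ℝ, stdNormalCDF v = ∫ x in Set.Iic v, stdNormalPDF x := fun _ => rfl
    rw [cdf_eq, cdf_eq]
    have h := intervalIntegral.integral_Iic_sub_Iic (μ := volume) (f := stdNormalPDF)
      (a := (0:ℝ)) (b := u) pdf_integrable.integrableOn pdf_integrable.integrableOn
    linarith
  have h := (pdf_continuous.integral_hasStrictDerivAt 0 w).hasDerivAt
  have h2 := h.add_const (stdNormalCDF 0)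
  exact h2.congr_of_eventuallyEq (Filter.Eventually.of_forall fun u => key u)

lemma pdf_hasDerivAt (w : ℝ) : HasDerivAt stdNormalPDF (-w * stdNormalPDF w) w := by
  have h1 : HasDerivAt (fun x : ℝ => -x ^ 2 / 2) (-w) w := by
    have : HasDerivAt (fun x : ℝ => x ^ 2) (2 * w) w := by
      simpa using (hasDerivAt_pow 2 w)
    have h := (this.neg.div_const 2)
    refine h.congr_deriv ?_
    ring
  have h2 : HasDerivAt (fun x : ℝ => Real.exp (-x ^ 2 / 2))
      (Real.exp (-w ^ 2 / 2) * (-w)) w := h1.exp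
  have h3 := h2.const_mul (Real.sqrt (2 * Real.pi))⁻¹
  unfold stdNormalPDF
  refine h3.congr_deriv ?_
  ring

lemma pdf_tendsto_atBot : Tendsto stdNormalPDF atBot (nhds 0) := by
  have h1 : Tendsto (fun x : ℝ => -x ^ 2 / 2) atBot atBot := by
    exact tendsto_atBot_mono (fun x => by simp only [id_eq]; nlinarith [sq_nonneg (x + 1)])
      (tendsto_atBot_add_const_right _ 1 tendsto_id)
  have h2 : Tendsto (fun x : ℝ => Real.exp (-x ^ 2 / 2)) atBot (nhds 0) :=
    Real.tendsto_exp_atBot.comp h1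
  have h3 := h2.const_mul (Real.sqrt (2 * Real.pi))⁻¹
  rw [mul_zero] at h3
  exact h3

lemma mills (w : ℝ) : 0 ≤ w * stdNormalCDF w + stdNormalPDF w := by
  rcases le_or_gt 0 w with hw | hw
  · have := cdf_pos w
    have := pdf_pos w
    nlinarith
  · -- For w < 0: φ w = ∫ x in Iic w, -x * φ x ≥ ∫ x in Iic w, -w * φ x = -w * Φ w
    have hint : Integrable (fun x : ℝ => -x * stdNormalPDF x) := by
      have h : Integrable (fun x : ℝ => x * Real.exp (-(1/2) * x ^ 2)) :=
        integrable_mul_exp_neg_mul_sq (by norm_num)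
      have h2 := (h.const_mul (Real.sqrt (2 * Real.pi))⁻¹).neg
      apply h2.congr
      filter_upwards with x
      simp only [Pi.neg_apply]
      rw [pdf_eq]; ring
    have heq : ∫ x in Set.Iic w, -x * stdNormalPDF x = stdNormalPDF w := by
      have := integral_Iic_of_hasDerivAt_of_tendsto' (a := w)
        (f := stdNormalPDF) (f' := fun x => -x * stdNormalPDF x) (m := 0)
        (fun x _ => pdf_hasDerivAt x) hint.integrableOn pdf_tendsto_atBot
      rw [this, sub_zero]
    have hmono : ∫ x in Set.Iic w, -w * stdNormalPDF x ≤
        ∫ x in Set.Iic w, -x * stdNormalPDF x := by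
      apply setIntegral_mono_on
        ((pdf_integrable.const_mul (-w)).integrableOn) hint.integrableOn measurableSet_Iic
      intro x hx
      have hx' : x ≤ w := hx
      have := (pdf_pos x).le
      nlinarith
    rw [heq, integral_const_mul] at hmono
    have : stdNormalCDF w = ∫ x in Set.Iic w, stdNormalPDF x := rfl
    rw [← this] at hmono
    linarith

theorem stmt2 :
    ConcaveOn ℝ Set.univ (fun w : ℝ => Real.log (stdNormalCDF w)) := by
  set f : ℝ → ℝ := fun w => Real.log (stdNormalCDF w) with hf
  have hd : ∀ w : ℝ, HasDerivAt f (stdNormalPDF w / stdNormalCDF w) w := fun w =>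
    (cdf_hasDerivAt w).log (cdf_pos w).ne'
  have hderiv : deriv f = fun w => stdNormalPDF w / stdNormalCDF w :=
    funext fun w => (hd w).deriv
  have hd2 : ∀ w : ℝ, HasDerivAt (deriv f)
      ((-w * stdNormalPDF w * stdNormalCDF w - stdNormalPDF w * stdNormalPDF w) /
        (stdNormalCDF w) ^ 2) w := by
    intro w
    rw [hderiv]
    exact (pdf_hasDerivAt w).div (cdf_hasDerivAt w) (cdf_pos w).ne'
  apply concaveOn_univ_of_deriv2_nonpos
  · exact fun w => (hd w).differentiableAt
  · exact fun w => (hd2 w).differentiableAt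
  · intro w
    have : deriv^[2] f w = deriv (deriv f) w := by
      simp [Function.iterate_succ, Function.iterate_one]
    rw [this, (hd2 w).deriv]
    apply div_nonpos_of_nonpos_of_nonneg _ (sq_nonneg _)
    have h1 := mills w
    have h2 := (pdf_pos w).le
    nlinarith
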